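/- arXiv:1207.4577 — 4 statements merged into one kernel-verified Lean document; each statement's English description precedes it below -/
import Mathlib

section
/- Let L be a complete lattice and f : L × L → L a function monotone in both arguments. Then ν X. μ Y. (X ⊓ f(X,Y)) = ν X. μ Y. f(X,Y), where μ and ν denote least and greatest fixpoints (which exist by Knaster–Tarski since the maps Y ↦ X ⊓ f(X,Y) and Y ↦ f(X,Y) are monotone, and the resulting maps in X are monotone). -/
/-- ν X. μ Y. (X ⊓ f(X,Y)) = ν X. μ Y. f(X,Y) for monotone binary f. -/
theorem nu_mu_contractive {L : Type*} [CompleteLattice L] (f : L → L → L)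
    (hf : ∀ ⦃x₁ x₂ y₁ y₂ : L⦄, x₁ ≤ x₂ → y₁ ≤ y₂ → f x₁ y₁ ≤ f x₂ y₂) :
    OrderHom.gfp
      ⟨fun X => OrderHom.lfp
          ⟨fun Y => X ⊓ f X Y, fun _ _ h => inf_le_inf_left X (hf le_rfl h)⟩,
        fun _ _ hX => OrderHom.lfp.monotone fun _ => inf_le_inf hX (hf hX le_rfl)⟩
    =
    OrderHom.gfp
      ⟨fun X => OrderHom.lfp
          ⟨fun Y => f X Y, fun _ _ h => hf le_rfl h⟩,
        fun _ _ hX => OrderHom.lfp.monotone fun _ => hf hX le_rfl⟩ := by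
  set H : L →o L :=
    ⟨fun X => OrderHom.lfp
        ⟨fun Y => X ⊓ f X Y, fun _ _ h => inf_le_inf_left X (hf le_rfl h)⟩,
      fun _ _ hX => OrderHom.lfp.monotone fun _ => inf_le_inf hX (hf hX le_rfl)⟩ with hHdef
  set G : L →o L :=
    ⟨fun X => OrderHom.lfp ⟨fun Y => f X Y, fun _ _ h => hf le_rfl h⟩,
      fun _ _ hX => OrderHom.lfp.monotone fun _ => hf hX le_rfl⟩ with hGdef
  apply le_antisymm
  · apply OrderHom.le_gfp
    set X := OrderHom.gfp H with hX
    have hfix : H X = X := OrderHom.map_gfp H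
    calc X = H X := hfix.symm
      _ ≤ G X := by
        apply OrderHom.lfp_le
        exact inf_le_right.trans
          (OrderHom.map_lfp ⟨fun Y => f X Y, fun _ _ h => hf le_rfl h⟩).le
  · apply OrderHom.le_gfp
    set a := OrderHom.gfp G with ha
    have hfixG : G a = a := OrderHom.map_gfp G
    -- a = lfp (f a)
    have ha_lfp : OrderHom.lfp ⟨fun Y => f a Y, fun _ _ h => hf le_rfl h⟩ = a := hfixG
    have hfaa : f a a = a := by
      have h := OrderHom.map_lfp (⟨fun Y => f a Y, fun _ _ h => hf le_rfl h⟩ : L →o L)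
      rw [ha_lfp] at h
      exact h
    set m := H a with hm
    have hmfix : a ⊓ f a m = m :=
      OrderHom.map_lfp (⟨fun Y => a ⊓ f a Y, fun _ _ h => inf_le_inf_left a (hf le_rfl h)⟩ : L →o L)
    have hma : m ≤ a := hmfix.symm.le.trans inf_le_left
    have hfam : f a m ≤ a := (hf le_rfl hma).trans hfaa.le
    -- a ≤ m
    have : a ≤ m := by
      rw [← ha_lfp]
      apply OrderHom.lfp_le
      exact le_inf hfam le_rfl |>.trans hmfix.le
    exact this
end

section
/- Let L be a complete lattice, h : L → L monotone, U = μ Y. h(Y) its least fixpoint, and V an element of L with U ≤ V. Then the least fixpoint of the monotone map Y ↦ V ⊓ h(Y) equals U. -/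
/-- if U = μ h and U ≤ V then μ (Y ↦ V ⊓ h Y) = U. -/
theorem lfp_inf_of_le {L : Type*} [CompleteLattice L] (h : L →o L) (V : L)
    (hUV : OrderHom.lfp h ≤ V) :
    OrderHom.lfp ⟨fun Y => V ⊓ h Y, fun _ _ hy => inf_le_inf_left V (h.mono hy)⟩ =
      OrderHom.lfp h := by
  set g : L →o L := ⟨fun Y => V ⊓ h Y, fun _ _ hy => inf_le_inf_left V (h.mono hy)⟩
  apply le_antisymm
  · apply OrderHom.lfp_le
    show V ⊓ h (OrderHom.lfp h) ≤ _
    rw [OrderHom.map_lfp]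
    exact inf_le_right
  · refine OrderHom.lfp_induction h (p := fun a => a ≤ OrderHom.lfp g) ?_ ?_
    · intro a ha hle
      have h1 : h a ≤ V := le_trans (by
        calc h a ≤ h (OrderHom.lfp h) := h.mono hle
        _ = OrderHom.lfp h := OrderHom.map_lfp h) hUV
      have h2 : h a ≤ h (OrderHom.lfp g) := h.mono ha
      have : h a ≤ g (OrderHom.lfp g) := le_inf h1 h2
      rwa [OrderHom.map_lfp] at this
    · intro s hs
      exact sSup_le hs
end

section
/- Let L be a complete lattice of subsets of a WQO (X, ≤) and suppose φ : Set X → Set X is monotone and factors through upward closure, i.e., φ(U) = φ(C↑ U) for all U (equivalently, φ(U) depends only on the upward closure of U). Then the least fixpoint μ φ is reached after finitely many iterations from ∅: there exists n ∈ ℕ with φⁿ(∅) = φ^{n+1}(∅) = μ φ. -/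
/-- over a WQO, a monotone operator that factors through upward closure
reaches its least fixpoint in finitely many iterations from ∅. -/
theorem upward_guarded_lfp_finite_convergence {X : Type*} [Preorder X]
    (hwqo : ∀ f : ℕ → X, ∃ i j, i < j ∧ f i ≤ f j)
    (φ : Set X → Set X) (hmono : Monotone φ)
    (hguard : ∀ U : Set X, φ U = φ {x | ∃ u ∈ U, u ≤ x}) :
    ∃ n : ℕ, φ^[n] ∅ = φ^[n + 1] ∅ ∧ φ^[n] ∅ = OrderHom.lfp ⟨φ, hmono⟩ := by
  set F : ℕ → Set X := fun n => φ^[n] ∅ with hFdef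
  have hFsucc : ∀ n, F (n + 1) = φ (F n) := fun n => Function.iterate_succ_apply' φ n ∅
  have hFmono : ∀ n, F n ⊆ F (n + 1) := by
    intro n
    induction n with
    | zero => simp [hFdef]
    | succ k ih => rw [hFsucc, hFsucc]; exact hmono ih
  have hFle : ∀ i j, i ≤ j → F i ⊆ F j := by
    intro i j hij
    induction hij with
    | refl => exact le_rfl
    | step _ ih => exact ih.trans (hFmono _)
  set C : ℕ → Set X := fun n => {x | ∃ u ∈ F n, u ≤ x} with hCdef
  have hCle : ∀ i j, i ≤ j → C i ⊆ C j := by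
    rintro i j hij x ⟨u, hu, hux⟩
    exact ⟨u, hFle i j hij hu, hux⟩
  have hCup : ∀ n x y, x ∈ C n → x ≤ y → y ∈ C n := by
    rintro n x y ⟨u, hu, hux⟩ hxy
    exact ⟨u, hu, hux.trans hxy⟩
  -- stabilization of the chain of upward closures
  have hstab : ∃ n, C (n + 1) ⊆ C n := by
    by_contra h
    push_neg at h
    have h' : ∀ n, ∃ x, x ∈ C (n + 1) ∧ x ∉ C n := by
      intro n
      rcases Set.not_subset.mp (h n) with ⟨x, hx, hx'⟩
      exact ⟨x, hx, hx'⟩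
    choose f hf1 hf2 using h'
    rcases hwqo f with ⟨i, j, hij, hle⟩
    exact hf2 j (hCup j (f i) (f j) (hCle (i + 1) j hij (hf1 i)) hle)
  rcases hstab with ⟨n, hn⟩
  have hCeq : C n = C (n + 1) := Set.Subset.antisymm (hCle n (n + 1) (by omega)) hn
  have hφC : ∀ m, φ (F m) = φ (C m) := fun m => hguard (F m)
  have hfix : F (n + 1) = F (n + 2) := by
    rw [hFsucc, hFsucc, hφC, hφC, hCeq]
  -- every iterate is below the lfp
  have hbelow : ∀ k, F k ⊆ OrderHom.lfp ⟨φ, hmono⟩ := by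
    intro k
    induction k with
    | zero => simp [hFdef]
    | succ m ih =>
      rw [hFsucc]
      calc φ (F m) ⊆ φ (OrderHom.lfp ⟨φ, hmono⟩) := hmono ih
        _ = OrderHom.lfp ⟨φ, hmono⟩ := OrderHom.map_lfp ⟨φ, hmono⟩
  refine ⟨n + 1, hfix, ?_⟩
  refine Set.Subset.antisymm (hbelow (n + 1)) ?_
  have : φ (F (n + 1)) ≤ F (n + 1) := by rw [← hFsucc]; exact hfix.symm.le
  exact OrderHom.lfp_le ⟨φ, hmono⟩ this
end

section
/- Let (X, ≤) be a WQO and φ : Set X → Set X monotone with φ(U) = φ(K↓ U) for all U, where K↓ U is the largest downward-closed subset of U. Then the greatest fixpoint ν φ is reached after finitely many iterations from the full set X: there exists n ∈ ℕ with φⁿ(X) = φ^{n+1}(X) = ν φ. -/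
/-- over a WQO, a monotone operator that factors through the downward
interior reaches its greatest fixpoint in finitely many iterations from the full set. -/
theorem downward_guarded_gfp_finite_convergence {X : Type*} [Preorder X]
    (hwqo : ∀ f : ℕ → X, ∃ i j, i < j ∧ f i ≤ f j)
    (φ : Set X → Set X) (hmono : Monotone φ)
    (hguard : ∀ U : Set X, φ U = φ {x | x ∈ U ∧ ∀ y, y ≤ x → y ∈ U}) :
    ∃ n : ℕ, φ^[n] Set.univ = φ^[n + 1] Set.univ ∧
      φ^[n] Set.univ = OrderHom.gfp ⟨φ, hmono⟩ := by
  classical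
  set A : ℕ → Set X := fun n => φ^[n] Set.univ with hAdef
  have hstep : ∀ n, A (n + 1) = φ (A n) := by
    intro n; simp [hAdef, Function.iterate_succ_apply']
  have hA : ∀ n, A (n + 1) ⊆ A n := by
    intro n
    induction n with
    | zero => intro x _; trivial
    | succ k ih =>
      have h2 := hmono ih
      rw [← hstep (k+1), ← hstep k] at h2
      exact h2
  have hAle : ∀ i j, i ≤ j → A j ⊆ A i := by
    intro i j hij
    induction hij with
    | refl => exact subset_rfl
    | step h ih => exact (hA _).trans ih
  set D : ℕ → Set X := fun n => {x | x ∈ A n ∧ ∀ y, y ≤ x → y ∈ A n} with hDdef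
  have hDle : ∀ i j, i ≤ j → D j ⊆ D i := by
    intro i j hij x hx
    exact ⟨hAle i j hij hx.1, fun y hy => hAle i j hij (hx.2 y hy)⟩
  have hDdown : ∀ n x y, x ∈ D n → y ≤ x → y ∈ D n := by
    intro n x y hx hy
    exact ⟨hx.2 y hy, fun z hz => hx.2 z (hz.trans hy)⟩
  -- find stabilization of D
  have hstab : ∃ n, D n = D (n + 1) := by
    by_contra h
    push_neg at h
    have hne : ∀ n, ∃ x, x ∈ D n ∧ x ∉ D (n + 1) := by
      intro n
      by_contra hc
      push_neg at hc
      exact h n (Set.Subset.antisymm (fun x hx => by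
        by_contra hnx
        exact hnx (hc x hx)) (hDle n (n+1) (Nat.le_succ n)))
    choose f hf1 hf2 using hne
    obtain ⟨i, j, hij, hle⟩ := hwqo f
    have : f j ∈ D (i + 1) := hDle (i+1) j hij (hf1 j)
    exact hf2 i (hDdown (i+1) (f j) (f i) this hle)
  obtain ⟨n, hn⟩ := hstab
  have hfix : A (n + 1) = A (n + 2) := by
    calc A (n + 1) = φ (A n) := hstep n
      _ = φ (D n) := hguard _
      _ = φ (D (n + 1)) := by rw [hn]
      _ = φ (A (n + 1)) := (hguard _).symm
      _ = A (n + 2) := (hstep (n+1)).symm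
  refine ⟨n + 1, hfix, ?_⟩
  have hfix' : φ (A (n + 1)) = A (n + 1) := by rw [← hstep (n+1), ← hfix]
  apply le_antisymm
  · exact OrderHom.le_gfp ⟨φ, hmono⟩ (le_of_eq hfix'.symm)
  · have : ∀ k, (OrderHom.gfp ⟨φ, hmono⟩ : Set X) ⊆ A k := by
      intro k
      induction k with
      | zero => intro x _; trivial
      | succ m ih =>
        rw [hstep m]
        calc (OrderHom.gfp ⟨φ, hmono⟩ : Set X) = φ (OrderHom.gfp ⟨φ, hmono⟩) :=
              (OrderHom.map_gfp ⟨φ, hmono⟩).symm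
          _ ⊆ φ (A m) := hmono ih
    exact this (n + 1)
end
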